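/- Let Q be a finitely generated subgroup of the multiplicative group of positive rational numbers such that the only element of Q that is a (positive) integer is 1. Then for every rational number r, the set of integers lying in the coset rQ = {r·q : q ∈ Q} is finite. -/

import Mathlib

/-- A nonzero rational with nonnegative p-adic valuation at every prime is an integer. -/
lemma aux_int_of_nonneg_val (x : ℚ) (hx : x ≠ 0)
    (h : ∀ p : ℕ, p.Prime → 0 ≤ padicValRat p x) : ∃ n : ℤ, x = (n : ℚ) := by
  have hd : x.den = 1 := by
    by_contra hd
    obtain ⟨p, hp, hpd⟩ := Nat.exists_prime_and_dvd hd
    haveI : Fact p.Prime := ⟨hp⟩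
    have h1 : padicValInt p x.num = 0 := by
      unfold padicValInt
      apply padicValNat.eq_zero_of_not_dvd
      intro hdvd
      have hcop := x.reduced
      have : p ∣ Nat.gcd x.num.natAbs x.den := Nat.dvd_gcd hdvd hpd
      rw [hcop] at this
      exact hp.one_lt.ne' (Nat.dvd_one.mp this)
    have h2 : 1 ≤ padicValNat p x.den :=
      one_le_padicValNat_of_dvd x.pos.ne' hpd
    have h3 := h p hp
    rw [padicValRat, h1] at h3
    omega
  exact ⟨x.num, ((x.den_eq_one_iff).mp hd).symm⟩

theorem stmt_0 (Q : Subgroup ℚˣ) (hpos : ∀ q ∈ Q, (0 : ℚ) < (q : ℚ))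
    (hfg : Q.FG)
    (hint : ∀ q ∈ Q, (∃ n : ℤ, (q : ℚ) = (n : ℚ)) → (q : ℚ) = 1) (r : ℚ) :
    {n : ℤ | ∃ q ∈ Q, (n : ℚ) = r * (q : ℚ)}.Finite := by
  by_cases hr : r = 0
  · subst hr
    apply Set.Finite.subset (Set.finite_singleton (0 : ℤ))
    rintro n ⟨q, hq, hn⟩
    simp only [zero_mul] at hn
    simpa using (by exact_mod_cast hn : n = 0)
  obtain ⟨T, hT⟩ := hfg
  set P : Finset ℕ :=
    T.sup (fun u => ((u : ℚ).num.natAbs.primeFactors ∪ (u : ℚ).den.primeFactors)) with hP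
  -- valuation of elements of Q vanishes outside P
  have key : ∀ p : ℕ, p.Prime → p ∉ P → ∀ q : ℚˣ, q ∈ Q → padicValRat p (q : ℚ) = 0 := by
    intro p hp hpP q hq
    haveI : Fact p.Prime := ⟨hp⟩
    rw [← hT] at hq
    induction hq using Subgroup.closure_induction with
    | mem u hu =>
        have hn : p ∉ (u : ℚ).num.natAbs.primeFactors ∪ (u : ℚ).den.primeFactors := by
          intro hc
          exact hpP (Finset.le_iff_subset.mp (Finset.le_sup (f := fun u : ℚˣ => ((u : ℚ).num.natAbs.primeFactors ∪ (u : ℚ).den.primeFactors)) hu) hc)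
        rw [Finset.mem_union, not_or] at hn
        have hnum : ¬ p ∣ (u : ℚ).num.natAbs := by
          intro hdvd
          exact hn.1 (Nat.mem_primeFactors.mpr ⟨hp, hdvd, by
            simpa [Int.natAbs_eq_zero] using (Rat.num_ne_zero.mpr u.ne_zero)⟩)
        have hden : ¬ p ∣ (u : ℚ).den := by
          intro hdvd
          exact hn.2 (Nat.mem_primeFactors.mpr ⟨hp, hdvd, (u : ℚ).den_nz⟩)
        rw [padicValRat]
        rw [show padicValInt p (u : ℚ).num = 0 from padicValNat.eq_zero_of_not_dvd hnum,
          padicValNat.eq_zero_of_not_dvd hden]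
        simp
    | one => simp [padicValRat.one]
    | mul x y hx hy ihx ihy =>
        rw [Units.val_mul, padicValRat.mul x.ne_zero y.ne_zero, ihx, ihy]
        simp
    | inv x hx ihx =>
        rw [Units.val_inv_eq_inv_val, padicValRat.inv, ihx]
        simp
  rw [Set.not_infinite.symm]
  intro hinf
  obtain e := hinf.natEmbedding
  have he : ∀ k : ℕ, ((e k : ℤ)) ∈ {n : ℤ | ∃ q ∈ Q, (n : ℚ) = r * (q : ℚ)} := fun k => (e k).2
  -- valuation vectors
  set F : ℕ → (↑P → ℕ) := fun k p => padicValNat (p : ℕ) ((e k : ℤ)).natAbs with hF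
  have hpwo : (Set.univ : Set (↑P → ℕ)).IsPWO :=
    Set.isPWO_of_wellQuasiOrderedLE _
  obtain ⟨m, n, hmn, hle⟩ := hpwo.exists_lt (f := F) (fun _ => Set.mem_univ _)
  obtain ⟨q₁, hq₁Q, hq₁⟩ := he m
  obtain ⟨q₂, hq₂Q, hq₂⟩ := he n
  have hn₁ : ((e m : ℤ)) ≠ 0 := by
    intro h0
    rw [h0] at hq₁
    have h' : r * (q₁ : ℚ) = 0 := by exact_mod_cast hq₁.symm
    rcases mul_eq_zero.mp h' with h | h
    · exact hr h
    · exact q₁.ne_zero h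
  have hn₂ : ((e n : ℤ)) ≠ 0 := by
    intro h0
    rw [h0] at hq₂
    have h' : r * (q₂ : ℚ) = 0 := by exact_mod_cast hq₂.symm
    rcases mul_eq_zero.mp h' with h | h
    · exact hr h
    · exact q₂.ne_zero h
  set u : ℚˣ := q₂ * q₁⁻¹ with hu
  have huQ : u ∈ Q := mul_mem hq₂Q (inv_mem hq₁Q)
  have huval : (u : ℚ) = ((e n : ℤ) : ℚ) / ((e m : ℤ) : ℚ) := by
    rw [hu, Units.val_mul, Units.val_inv_eq_inv_val]
    rw [hq₁, hq₂]
    have h1 : (q₁ : ℚ) ≠ 0 := q₁.ne_zero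
    field_simp
  have hune : (u : ℚ) ≠ 0 := u.ne_zero
  have hval : ∀ p : ℕ, p.Prime → 0 ≤ padicValRat p (u : ℚ) := by
    intro p hp
    haveI : Fact p.Prime := ⟨hp⟩
    by_cases hpP : p ∈ P
    · rw [huval, padicValRat.div (by exact_mod_cast hn₂) (by exact_mod_cast hn₁)]
      rw [padicValRat.of_int, padicValRat.of_int]
      unfold padicValInt
      have := hle ⟨p, hpP⟩
      simp only [hF] at this
      omega
    · rw [key p hp hpP u huQ]
  have hu1 : (u : ℚ) = 1 := hint u huQ (aux_int_of_nonneg_val _ hune hval)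
  rw [huval] at hu1
  have : ((e n : ℤ) : ℚ) = ((e m : ℤ) : ℚ) :=
    (div_eq_one_iff_eq (by exact_mod_cast hn₁)).mp hu1
  have hinj : e n = e m := Subtype.ext (by exact_mod_cast this)
  exact absurd (e.injective hinj) (by omega)
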